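/- For every label x and all nested sequents X and Y, the labeled polytrees 𝔏ₓ(X, ∘{Y}) and 𝔏ₓ(•{X}, Y) are isomorphic as labeled graphs, i.e., there is a bijection f between their vertex sets such that (u, v) is an edge iff (f u, f v) is an edge, and every vertex has the same label (multiset of formulae) as its image. -/
import Mathlib


set_option autoImplicit false

/-! # Common definitions: tense logics, nested/labeled/display calculi
    (following Ciabattoni, Lyon, Ramanayake, Tiu,
     "Display to Labeled Proofs and Back Again for Tense Logics") -/

/-- Diamonds: `wd` = ◇ (white diamond), `bd` = ◆ (black diamond). -/
inductive Dmd : Type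
  | wd
  | bd
deriving DecidableEq, Repr

/-- Tense formulae in negation normal form:
    `A ::= p | p̄ | A ∧ A | A ∨ A | □A | ◇A | ■A | ◆A`. -/
inductive Formula : Type
  | pos : Nat → Formula      -- propositional variable p
  | neg : Nat → Formula      -- negated propositional variable p̄
  | and : Formula → Formula → Formula
  | or : Formula → Formula → Formula
  | box : Formula → Formula   -- □
  | dia : Formula → Formula   -- ◇
  | bbox : Formula → Formula  -- ■
  | bdia : Formula → Formula  -- ◆
deriving DecidableEq, Repr

/-- The De Morgan dual `Ā` of a formula `A`. -/
def Formula.dual : Formula → Formula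
  | .pos p => .neg p
  | .neg p => .pos p
  | .and A B => .or A.dual B.dual
  | .or A B => .and A.dual B.dual
  | .box A => .dia A.dual
  | .dia A => .box A.dual
  | .bbox A => .bdia A.dual
  | .bdia A => .bbox A.dual

/-- `A → B` is defined as `Ā ∨ B`. -/
def Formula.imp (A B : Formula) : Formula := A.dual.or B

/-- `A ↔ B` is defined as `(A → B) ∧ (B → A)`. -/
def Formula.iffF (A B : Formula) : Formula := (A.imp B).and (B.imp A)

/-- `⟨?⟩A` for a diamond `⟨?⟩ ∈ {◇, ◆}`. -/
def dmdF : Dmd → Formula → Formula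
  | .wd, A => .dia A
  | .bd, A => .bdia A

/-- `⟨?⟩₁…⟨?⟩ₘ A` for a string of diamonds. -/
def applyDmds : List Dmd → Formula → Formula
  | [], A => A
  | d :: ds, A => dmdF d (applyDmds ds A)

/-- A general path axiom `ΠA → ΣA`, given by the strings `Π` (ant) and `Σ` (suc). -/
structure GenPath : Type where
  ant : List Dmd
  suc : List Dmd

/-- A path axiom `ΠA → ⟨?⟩A`. -/
structure PathAx : Type where
  ant : List Dmd
  suc : Dmd
deriving DecidableEq

/-- Every path axiom is a general path axiom. -/
def pathToGen (F : PathAx) : GenPath := ⟨F.ant, [F.suc]⟩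

/-- All instances `ΠA → ΣA` of the general path axioms in `GP`. -/
def gpInstances (GP : Set GenPath) : Set Formula :=
  {F | ∃ gp ∈ GP, ∃ A : Formula, F = (applyDmds gp.ant A).imp (applyDmds gp.suc A)}

/-- The Hilbert system `Kt + S`: classical propositional axioms, modus ponens,
    the tense axioms, and necessitation for □ and ■, plus the axioms in `S`. -/
inductive KtProof (S : Set Formula) : Formula → Prop
  | ax {A : Formula} : A ∈ S → KtProof S A
  | pl1 (A B : Formula) : KtProof S (A.imp (B.imp A))
  | pl2 (A B : Formula) : KtProof S ((B.dual.imp A.dual).imp (A.imp B))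
  | pl3 (A B C : Formula) :
      KtProof S ((A.imp (B.imp C)).imp ((A.imp B).imp (A.imp C)))
  | tense1 (A : Formula) : KtProof S (A.imp (Formula.box (Formula.bdia A)))
  | tense2 (A : Formula) : KtProof S (A.imp (Formula.bbox (Formula.dia A)))
  | kbox (A B : Formula) :
      KtProof S ((Formula.box (A.imp B)).imp ((Formula.box A).imp (Formula.box B)))
  | kbbox (A B : Formula) :
      KtProof S ((Formula.bbox (A.imp B)).imp ((Formula.bbox A).imp (Formula.bbox B)))
  | boxdual (A : Formula) :
      KtProof S ((Formula.box A).iffF (Formula.dia A.dual).dual)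
  | bboxdual (A : Formula) :
      KtProof S ((Formula.bbox A).iffF (Formula.bdia A.dual).dual)
  | mp {A B : Formula} : KtProof S (A.imp B) → KtProof S A → KtProof S B
  | necbox {A : Formula} : KtProof S A → KtProof S (Formula.box A)
  | necbbox {A : Formula} : KtProof S A → KtProof S (Formula.bbox A)

/-! ## Nested sequents -/

/-- Nested sequents: `X ::= ε | A | X, X | ∘{X} | •{X}`. -/
inductive NSeq : Type
  | empty
  | fml : Formula → NSeq
  | comma : NSeq → NSeq → NSeq
  | white : NSeq → NSeq   -- ∘{X}
  | black : NSeq → NSeq   -- •{X}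
deriving DecidableEq, Repr

/-- Comma is associative and commutative with unit ε: the induced congruence. -/
inductive NEquiv : NSeq → NSeq → Prop
  | refl (X : NSeq) : NEquiv X X
  | symm {X Y : NSeq} : NEquiv X Y → NEquiv Y X
  | trans {X Y Z : NSeq} : NEquiv X Y → NEquiv Y Z → NEquiv X Z
  | comm (X Y : NSeq) : NEquiv (X.comma Y) (Y.comma X)
  | assoc (X Y Z : NSeq) : NEquiv ((X.comma Y).comma Z) (X.comma (Y.comma Z))
  | unit (X : NSeq) : NEquiv (X.comma NSeq.empty) X
  | commaCongr {X X' Y Y' : NSeq} :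
      NEquiv X X' → NEquiv Y Y' → NEquiv (X.comma Y) (X'.comma Y')
  | whiteCongr {X Y : NSeq} : NEquiv X Y → NEquiv X.white Y.white
  | blackCongr {X Y : NSeq} : NEquiv X Y → NEquiv X.black Y.black

/-- `★₁{… ★ₙ{Y} …}` where `★ⱼ = ∘` if `⟨?⟩ⱼ = ◇` and `★ⱼ = •` if `⟨?⟩ⱼ = ◆`. -/
def nestDmds : List Dmd → NSeq → NSeq
  | [], Y => Y
  | .wd :: ds, Y => (nestDmds ds Y).white
  | .bd :: ds, Y => (nestDmds ds Y).black

/-- The structural rules `NestSt(GP)` (premise, conclusion): for each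
    `ΠA → ΣA ∈ GP`, from `X, ★Σ{Y}` infer `X, ★Π{Y}`. -/
def NestSt (GP : Set GenPath) : NSeq → NSeq → Prop :=
  fun prem concl => ∃ gp ∈ GP, ∃ X Y : NSeq,
    prem = X.comma (nestDmds gp.suc Y) ∧ concl = X.comma (nestDmds gp.ant Y)

/-- The empty set of extension rules on nested sequents. -/
def NoNest : NSeq → NSeq → Prop := fun _ _ => False

/-- The shallow nested (display) calculus `SKT` extended with the
    structural rules `Ext` (relating premise to conclusion); nested sequents are
    treated up to the congruence `NEquiv` (comma is AC with unit ε). -/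
inductive SKT (Ext : NSeq → NSeq → Prop) : NSeq → Prop
  | id (X : NSeq) (p : Nat) :
      SKT Ext ((X.comma (.fml (.pos p))).comma (.fml (.neg p)))
  | orR {X : NSeq} {A B : Formula} :
      SKT Ext (X.comma ((NSeq.fml A).comma (.fml B))) →
      SKT Ext (X.comma (.fml (.or A B)))
  | andR {X : NSeq} {A B : Formula} :
      SKT Ext (X.comma (.fml A)) → SKT Ext (X.comma (.fml B)) →
      SKT Ext (X.comma (.fml (.and A B)))
  | ctr {X Y : NSeq} : SKT Ext (X.comma (Y.comma Y)) → SKT Ext (X.comma Y)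
  | wk {X Y : NSeq} : SKT Ext X → SKT Ext (X.comma Y)
  | rf {X Y : NSeq} : SKT Ext (X.comma Y.white) → SKT Ext (X.black.comma Y)
  | rp {X Y : NSeq} : SKT Ext (X.comma Y.black) → SKT Ext (X.white.comma Y)
  | bbox {X : NSeq} {A : Formula} :
      SKT Ext (X.comma (NSeq.fml A).black) → SKT Ext (X.comma (.fml (.bbox A)))
  | box {X : NSeq} {A : Formula} :
      SKT Ext (X.comma (NSeq.fml A).white) → SKT Ext (X.comma (.fml (.box A)))
  | bdia {X Y : NSeq} {A : Formula} :
      SKT Ext ((X.comma (Y.comma (.fml A)).black).comma (.fml (.bdia A))) →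
      SKT Ext ((X.comma Y.black).comma (.fml (.bdia A)))
  | dia {X Y : NSeq} {A : Formula} :
      SKT Ext ((X.comma (Y.comma (.fml A)).white).comma (.fml (.dia A))) →
      SKT Ext ((X.comma Y.white).comma (.fml (.dia A)))
  | ext {X Y : NSeq} : Ext X Y → SKT Ext X → SKT Ext Y
  | equiv {X Y : NSeq} : SKT Ext X → NEquiv X Y → SKT Ext Y

/-! ## Deep nested calculus -/

/-- One-hole contexts over nested sequents (up to `NEquiv` this suffices). -/
inductive Ctx : Type
  | hole
  | commaL : Ctx → NSeq → Ctx
  | white : Ctx → Ctx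
  | black : Ctx → Ctx

/-- Filling the hole of a context with a nested sequent. -/
def Ctx.fill : Ctx → NSeq → NSeq
  | .hole, X => X
  | .commaL C Y, X => (C.fill X).comma Y
  | .white C, X => (C.fill X).white
  | .black C, X => (C.fill X).black

/-- The deep nested calculus `DKT` extended with rules `Ext`
    (premise, conclusion); sequents are treated up to `NEquiv`. -/
inductive DKT (Ext : NSeq → NSeq → Prop) : NSeq → Prop
  | id (C : Ctx) (p : Nat) :
      DKT Ext (C.fill ((NSeq.fml (.pos p)).comma (.fml (.neg p))))
  | andD {C : Ctx} {Y : NSeq} {A B : Formula} :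
      DKT Ext (C.fill ((NSeq.fml A).comma Y)) →
      DKT Ext (C.fill ((NSeq.fml B).comma Y)) →
      DKT Ext (C.fill ((NSeq.fml (.and A B)).comma Y))
  | orD {C : Ctx} {Y : NSeq} {A B : Formula} :
      DKT Ext (C.fill ((NSeq.fml A).comma ((NSeq.fml B).comma Y))) →
      DKT Ext (C.fill ((NSeq.fml (.or A B)).comma Y))
  | bboxD {C : Ctx} {A : Formula} :
      DKT Ext (C.fill ((NSeq.fml (.bbox A)).comma (NSeq.fml A).black)) →
      DKT Ext (C.fill (.fml (.bbox A)))
  | boxD {C : Ctx} {A : Formula} :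
      DKT Ext (C.fill ((NSeq.fml (.box A)).comma (NSeq.fml A).white)) →
      DKT Ext (C.fill (.fml (.box A)))
  | bdia1 {C : Ctx} {Y : NSeq} {A : Formula} :
      DKT Ext (C.fill ((Y.comma (.fml A)).black.comma (.fml (.bdia A)))) →
      DKT Ext (C.fill (Y.black.comma (.fml (.bdia A))))
  | bdia2 {C : Ctx} {Y : NSeq} {A : Formula} :
      DKT Ext (C.fill ((Y.comma (.fml (.bdia A))).white.comma (.fml A))) →
      DKT Ext (C.fill ((Y.comma (.fml (.bdia A))).white))
  | dia1 {C : Ctx} {Y : NSeq} {A : Formula} :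
      DKT Ext (C.fill ((Y.comma (.fml A)).white.comma (.fml (.dia A)))) →
      DKT Ext (C.fill (Y.white.comma (.fml (.dia A))))
  | dia2 {C : Ctx} {Y : NSeq} {A : Formula} :
      DKT Ext (C.fill ((Y.comma (.fml (.dia A))).black.comma (.fml A))) →
      DKT Ext (C.fill ((Y.comma (.fml (.dia A))).black))
  | ext {X Y : NSeq} : Ext X Y → DKT Ext X → DKT Ext Y
  | equiv {X Y : NSeq} : DKT Ext X → NEquiv X Y → DKT Ext Y

/-! ## Display rules and display equivalence -/

/-- `DisplayDeriv X Z`: `Z` is derivable from `X` using only the display rules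
    (rf) and (rp) (and rearrangement by the comma-congruence `NEquiv`). -/
inductive DisplayDeriv : NSeq → NSeq → Prop
  | refl (X : NSeq) : DisplayDeriv X X
  | equiv {X Y Z : NSeq} : NEquiv X Y → DisplayDeriv Y Z → DisplayDeriv X Z
  | rf {X Y Z : NSeq} :
      DisplayDeriv (X.black.comma Y) Z → DisplayDeriv (X.comma Y.white) Z
  | rp {X Y Z : NSeq} :
      DisplayDeriv (X.white.comma Y) Z → DisplayDeriv (X.comma Y.black) Z

/-- Two nested sequents are display equivalent when each is derivable from the
    other using only the display rules. -/
def DisplayEquiv (X Y : NSeq) : Prop := DisplayDeriv X Y ∧ DisplayDeriv Y X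

/-! ## Labeled sequents and the labeled calculus G3Kt -/

abbrev Label : Type := Nat

/-- A set of relational atoms `Rxy`. -/
abbrev RelSet : Type := Finset (Label × Label)

/-- A labeled sequent `R, Γ`. -/
abbrev LSeq : Type := RelSet × Multiset (Label × Formula)

/-- The label `z` occurs in the labeled sequent `S`. -/
def occursLS (z : Label) (S : LSeq) : Prop :=
  (∃ w, (z, w) ∈ S.1 ∨ (w, z) ∈ S.1) ∨ ∃ A, (z, A) ∈ S.2

/-- `R_◇ x y := Rxy` and `R_◆ x y := Ryx`. -/
def relAtom : Dmd → Label → Label → Label × Label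
  | .wd, x, y => (x, y)
  | .bd, x, y => (y, x)

/-- Relational atoms of a `Π`-chain through the list of labels `ls`. -/
def chainAtoms : List Dmd → List Label → List (Label × Label)
  | d :: ds, a :: b :: rest => relAtom d a b :: chainAtoms ds (b :: rest)
  | _, _ => []

/-- `ls` is a chain of labels for the diamond string `ds` from `x` to `y`
    (an empty string forces `x = y`). -/
def IsChainList (ds : List Dmd) (x y : Label) (ls : List Label) : Prop :=
  ls.length = ds.length + 1 ∧ ls.head? = some x ∧ ls.getLast? = some y

/-- The structural rules `LabSt(GP)` (premise, conclusion): for `ΠA → ΣA ∈ GP`,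
    from `R, R_Π x y, R_Σ x y, Γ` infer `R, R_Π x y, Γ`, where all labels in
    `R_Σ x y` other than `x, y` are eigenvariables. -/
def LabSt (GP : Set GenPath) : LSeq → LSeq → Prop :=
  fun prem concl => ∃ gp ∈ GP,
    ∃ (R : RelSet) (Γ : Multiset (Label × Formula)) (x y : Label)
      (als sls : List Label),
      IsChainList gp.ant x y als ∧ IsChainList gp.suc x y sls ∧
      concl = (R ∪ (chainAtoms gp.ant als).toFinset, Γ) ∧
      prem = (R ∪ (chainAtoms gp.ant als).toFinset ∪
                (chainAtoms gp.suc sls).toFinset, Γ) ∧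
      (∀ z ∈ sls, z ≠ x → z ≠ y → ¬ occursLS z concl)

/-- The empty set of extension rules on labeled sequents. -/
def NoExt : LSeq → LSeq → Prop := fun _ _ => False

/-- Derivations in the labeled calculus `G3Kt` extended with rules `Ext`
    (relating premise to conclusion). -/
inductive G3KtD (Ext : LSeq → LSeq → Prop) :
    RelSet → Multiset (Label × Formula) → Type
  | id (R : RelSet) (Γ : Multiset (Label × Formula)) (x : Label) (p : Nat) :
      G3KtD Ext R ((x, .pos p) ::ₘ (x, .neg p) ::ₘ Γ)
  | orR (R : RelSet) (Γ : Multiset (Label × Formula)) (x : Label) (A B : Formula)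
      (D : G3KtD Ext R ((x, A) ::ₘ (x, B) ::ₘ Γ)) :
      G3KtD Ext R ((x, .or A B) ::ₘ Γ)
  | andR (R : RelSet) (Γ : Multiset (Label × Formula)) (x : Label) (A B : Formula)
      (D1 : G3KtD Ext R ((x, A) ::ₘ Γ)) (D2 : G3KtD Ext R ((x, B) ::ₘ Γ)) :
      G3KtD Ext R ((x, .and A B) ::ₘ Γ)
  | boxR (R : RelSet) (Γ : Multiset (Label × Formula)) (x y : Label) (A : Formula)
      (hy : ¬ occursLS y (R, (x, Formula.box A) ::ₘ Γ))
      (D : G3KtD Ext (insert (x, y) R) ((y, A) ::ₘ Γ)) :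
      G3KtD Ext R ((x, .box A) ::ₘ Γ)
  | diaR (R : RelSet) (Γ : Multiset (Label × Formula)) (x y : Label) (A : Formula)
      (h : (x, y) ∈ R)
      (D : G3KtD Ext R ((y, A) ::ₘ (x, Formula.dia A) ::ₘ Γ)) :
      G3KtD Ext R ((x, .dia A) ::ₘ Γ)
  | bboxR (R : RelSet) (Γ : Multiset (Label × Formula)) (x y : Label) (A : Formula)
      (hy : ¬ occursLS y (R, (x, Formula.bbox A) ::ₘ Γ))
      (D : G3KtD Ext (insert (y, x) R) ((y, A) ::ₘ Γ)) :
      G3KtD Ext R ((x, .bbox A) ::ₘ Γ)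
  | bdiaR (R : RelSet) (Γ : Multiset (Label × Formula)) (x y : Label) (A : Formula)
      (h : (y, x) ∈ R)
      (D : G3KtD Ext R ((y, A) ::ₘ (x, Formula.bdia A) ::ₘ Γ)) :
      G3KtD Ext R ((x, .bdia A) ::ₘ Γ)
  | ext (R' : RelSet) (Γ' : Multiset (Label × Formula))
      (R : RelSet) (Γ : Multiset (Label × Formula))
      (h : Ext (R', Γ') (R, Γ)) (D : G3KtD Ext R' Γ') : G3KtD Ext R Γ

/-- Derivability in `G3Kt + Ext`. -/
def G3KtDeriv (Ext : LSeq → LSeq → Prop) (R : RelSet)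
    (Γ : Multiset (Label × Formula)) : Prop :=
  Nonempty (G3KtD Ext R Γ)

/-- `Q` holds of every labeled sequent occurring in the derivation `D`
    (including the end sequent). -/
def G3KtD.allSeq {Ext : LSeq → LSeq → Prop} (Q : LSeq → Prop) :
    ∀ {R : RelSet} {Γ : Multiset (Label × Formula)}, G3KtD Ext R Γ → Prop
  | _, _, .id R Γ x p => Q (R, (x, .pos p) ::ₘ (x, .neg p) ::ₘ Γ)
  | _, _, .orR R Γ x A B D => Q (R, (x, .or A B) ::ₘ Γ) ∧ D.allSeq Q
  | _, _, .andR R Γ x A B D1 D2 =>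
      Q (R, (x, .and A B) ::ₘ Γ) ∧ D1.allSeq Q ∧ D2.allSeq Q
  | _, _, .boxR R Γ x _ A _ D => Q (R, (x, .box A) ::ₘ Γ) ∧ D.allSeq Q
  | _, _, .diaR R Γ x _ A _ D => Q (R, (x, .dia A) ::ₘ Γ) ∧ D.allSeq Q
  | _, _, .bboxR R Γ x _ A _ D => Q (R, (x, .bbox A) ::ₘ Γ) ∧ D.allSeq Q
  | _, _, .bdiaR R Γ x _ A _ D => Q (R, (x, .bdia A) ::ₘ Γ) ∧ D.allSeq Q
  | _, _, .ext _ _ R Γ _ D => Q (R, Γ) ∧ D.allSeq Q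

/-! ## Paths, inverses, compositions, completion, propagation rules -/

/-- The inverse of a diamond: `◇⁻¹ = ◆` and `◆⁻¹ = ◇`. -/
def Dmd.inv : Dmd → Dmd
  | .wd => .bd
  | .bd => .wd

/-- The inverse `I(F)` of a path axiom `F`. -/
def PathAx.inv (F : PathAx) : PathAx := ⟨(F.ant.map Dmd.inv).reverse, F.suc.inv⟩

/-- `I(P)`, the set of inverses of the path axioms in `P`. -/
def invSet (P : Set PathAx) : Set PathAx := {F | ∃ G ∈ P, F = G.inv}

/-- The completion `P*`: the smallest set of path axioms containing `P`,
    containing `◇A → ◇A` and `◆A → ◆A`, and closed under compositions. -/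
inductive Completion (P : Set PathAx) : PathAx → Prop
  | base {F : PathAx} : F ∈ P → Completion P F
  | wrefl : Completion P ⟨[Dmd.wd], Dmd.wd⟩
  | brefl : Completion P ⟨[Dmd.bd], Dmd.bd⟩
  | comp {F G : PathAx} (i : Nat) (hi : i < G.ant.length) :
      Completion P F → Completion P G → G.ant.get ⟨i, hi⟩ = F.suc →
      Completion P ⟨G.ant.take i ++ F.ant ++ G.ant.drop (i + 1), G.suc⟩

/-- `(P ∪ I(P))*`. -/
def PStar (P : Set PathAx) : PathAx → Prop := Completion (P ∪ invSet P)

/-- A path from `x` to `y` with the given string of diamonds in the propagation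
    graph determined by the edge set `E`: each `Rxy` contributes the labeled
    edges `(x, y, ◇)` and `(y, x, ◆)`. -/
inductive LPath (E : Finset (Label × Label)) : Label → Label → List Dmd → Prop
  | nil (x : Label) : LPath E x x []
  | fwd {x z y : Label} {ds : List Dmd} :
      (x, z) ∈ E → LPath E z y ds → LPath E x y (Dmd.wd :: ds)
  | bwd {x z y : Label} {ds : List Dmd} :
      (z, x) ∈ E → LPath E z y ds → LPath E x y (Dmd.bd :: ds)

/-- The labeled propagation rules `LabPr(P)` (premise, conclusion):
    from `R, x:⟨?⟩A, y:A, Γ` infer `R, x:⟨?⟩A, Γ`, provided there is a path `π`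
    from `x` to `y` in the propagation graph of the premise whose string `Π`
    satisfies `ΠA → ⟨?⟩A ∈ (P ∪ I(P))*`. -/
def LabPr (P : Set PathAx) : LSeq → LSeq → Prop :=
  fun prem concl =>
    ∃ (R : RelSet) (Γ : Multiset (Label × Formula)) (x y : Label)
      (A : Formula) (d : Dmd) (Pi : List Dmd),
      prem = (R, (x, dmdF d A) ::ₘ (y, A) ::ₘ Γ) ∧
      concl = (R, (x, dmdF d A) ::ₘ Γ) ∧
      LPath R x y Pi ∧ PStar P ⟨Pi, d⟩

/-! ## Labeled graphs, labeled polytrees, and the translations 𝔏 and 𝔑 -/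

/-- A labeled graph `(V, E, L)`: vertices decorated with multisets of formulae. -/
structure LGraph : Type where
  V : Finset Label
  E : Finset (Label × Label)
  L : Label → Multiset Formula

/-- Union of labeled graphs (multiset union of labels at shared vertices). -/
def LGraph.union (G H : LGraph) : LGraph :=
  ⟨G.V ∪ H.V, G.E ∪ H.E, fun z => G.L z + H.L z⟩

/-- Isomorphism of labeled graphs: a bijection between the vertex sets
    preserving edges and vertex labels. -/
def LGraph.Iso (G H : LGraph) : Prop :=
  ∃ f : Label → Label, Set.BijOn f ↑G.V ↑H.V ∧
    (∀ u ∈ G.V, ∀ v ∈ G.V, ((u, v) ∈ G.E ↔ (f u, f v) ∈ H.E)) ∧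
    (∀ v ∈ G.V, G.L v = H.L (f v))

/-- A labeled graph is a labeled polytree when its underlying undirected
    graph is a tree. -/
def LGraph.IsPolytree (G : LGraph) : Prop :=
  (∀ x y : Label, (x, y) ∈ G.E → (y, x) ∉ G.E) ∧
  (∀ e ∈ G.E, e.1 ∈ G.V ∧ e.2 ∈ G.V) ∧
  ((SimpleGraph.fromRel fun a b => (a, b) ∈ G.E).induce (↑G.V : Set Label)).IsTree

/-- The translation `𝔏ₓ` from nested sequents to labeled graphs (relational,
    since fresh vertices may be chosen arbitrarily): `LabT x X G` states that
    `G` is a labeled graph obtained by translating `X` starting at vertex `x`. -/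
inductive LabT : Label → NSeq → LGraph → Prop
  | empty (x : Label) : LabT x .empty ⟨∅, ∅, fun _ => 0⟩
  | fml (x : Label) (A : Formula) :
      LabT x (.fml A) ⟨{x}, ∅, fun z => if z = x then {A} else 0⟩
  | comma {x : Label} {X Y : NSeq} {G H : LGraph} :
      LabT x X G → LabT x Y H → G.V ∩ H.V ⊆ {x} →
      LabT x (X.comma Y) (G.union H)
  | white {x y : Label} {X : NSeq} {G : LGraph} :
      LabT y X G → x ∉ G.V → x ≠ y →
      LabT x X.white ⟨insert x (insert y G.V), insert (x, y) G.E, G.L⟩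
  | black {x y : Label} {X : NSeq} {G : LGraph} :
      LabT y X G → x ∉ G.V → x ≠ y →
      LabT x X.black ⟨insert x (insert y G.V), insert (y, x) G.E, G.L⟩

/-- The translation `𝔑ₓ` from labeled polytrees (rooted at a chosen vertex `x`)
    to nested sequents: the inverse of the translation `𝔏ₓ`. -/
def NTrans (x : Label) (G : LGraph) (X : NSeq) : Prop := LabT x X G

/-- The labeled graph of a labeled sequent `R, Γ`: vertices are the occurring
    labels, edges are given by `R`, and each vertex `x` is labeled by the
    multiset `{A | x:A ∈ Γ}`. -/
def toLGraph (R : RelSet) (Γ : Multiset (Label × Formula)) : LGraph where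
  V := R.image Prod.fst ∪ R.image Prod.snd ∪ (Γ.map Prod.fst).toFinset
  E := R
  L := fun z => (Γ.filter fun p => p.1 = z).map Prod.snd

/-- The multiset of labeled formulae of a labeled graph, read as a sequent. -/
def LGraph.toSeqGamma (G : LGraph) : Multiset (Label × Formula) :=
  G.V.val.bind fun v => (G.L v).map fun A => (v, A)

/-- The set of labels occurring in a labeled sequent. -/
def seqLabels (R : RelSet) (Γ : Multiset (Label × Formula)) : Set Label :=
  {z | (∃ w, (z, w) ∈ R ∨ (w, z) ∈ R) ∨ ∃ A, (z, A) ∈ Γ}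

/-- `R, Γ` is a labeled polytree sequent: its underlying undirected graph
    (on the occurring labels) is a tree. -/
def IsPolytreeSeq (R : RelSet) (Γ : Multiset (Label × Formula)) : Prop :=
  (∀ x y : Label, (x, y) ∈ R → (y, x) ∉ R) ∧
  ((SimpleGraph.fromRel fun a b => (a, b) ∈ R).induce (seqLabels R Γ)).IsTree

/-- The labeled edges `(u, v, ◇)` and `(v, u, ◆)` of the propagation graph
    determined by an edge set. -/
def propEdges (E : Finset (Label × Label)) : Set (Label × Label × Dmd) :=
  {e | ∃ u v : Label, (u, v) ∈ E ∧ (e = (u, v, Dmd.wd) ∨ e = (v, u, Dmd.bd))}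

/-- The deep propagation rules `DeepPr(P)` (premise, conclusion), expressed via
    the labeled polytree representation of nested sequents: from
    `X[⟨?⟩A]ᵢ[A]ⱼ` infer `X[⟨?⟩A]ᵢ[∅]ⱼ`, provided there is a path from node `i`
    (= `u`) to node `j` (= `v`) in the propagation graph of the premise whose
    string `Π` satisfies `ΠA → ⟨?⟩A ∈ (P ∪ I(P))*`. -/
def DeepPrL (P : Set PathAx) : NSeq → NSeq → Prop :=
  fun prem concl =>
    ∃ (r : Label) (G : LGraph) (u v : Label) (A : Formula) (d : Dmd)
      (Pi : List Dmd),
      LabT r prem G ∧ LPath G.E u v Pi ∧ PStar P ⟨Pi, d⟩ ∧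
      dmdF d A ∈ G.L u ∧ A ∈ G.L v ∧
      LabT r concl ⟨G.V, G.E, fun z => if z = v then (G.L v).erase A else G.L z⟩

/-- Substitution of the label `y` by the label `x`. -/
def subLabel (x y z : Label) : Label := if z = y then x else z

lemma labT_support {r : Label} {S : NSeq} {G : LGraph} (h : LabT r S G) :
    ∀ z, z ∉ G.V → G.L z = 0 := by
  induction h with
  | empty => intro z _; rfl
  | fml x A =>
      intro z hz
      simp only [Finset.mem_singleton] at hz
      simp [hz]
  | comma h1 h2 hint ih1 ih2 =>
      intro z hz
      simp only [LGraph.union, Finset.mem_union, not_or] at hz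
      show _ + _ = 0
      rw [ih1 z hz.1, ih2 z hz.2]; rfl
  | white h hx hxy ih =>
      intro z hz
      simp only [Finset.mem_insert, not_or] at hz
      exact ih z hz.2.2
  | black h hx hxy ih =>
      intro z hz
      simp only [Finset.mem_insert, not_or] at hz
      exact ih z hz.2.2

lemma labT_edges {r : Label} {S : NSeq} {G : LGraph} (h : LabT r S G) :
    ∀ e ∈ G.E, e.1 ∈ G.V ∧ e.2 ∈ G.V := by
  induction h with
  | empty => intro e he; simp at he
  | fml x A => intro e he; simp at he
  | comma h1 h2 hint ih1 ih2 =>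
      intro e he
      simp only [LGraph.union, Finset.mem_union] at he ⊢
      rcases he with he | he
      · exact ⟨Or.inl (ih1 e he).1, Or.inl (ih1 e he).2⟩
      · exact ⟨Or.inr (ih2 e he).1, Or.inr (ih2 e he).2⟩
  | @white x y X G h hx hxy ih =>
      intro e he
      simp only [Finset.mem_insert] at he ⊢
      rcases he with he | he
      · subst he; simp
      · exact ⟨Or.inr (Or.inr (ih e he).1), Or.inr (Or.inr (ih e he).2)⟩
  | @black x y X G h hx hxy ih =>
      intro e he
      simp only [Finset.mem_insert] at he ⊢
      rcases he with he | he
      · subst he; simp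
      · exact ⟨Or.inr (Or.inr (ih e he).1), Or.inr (Or.inr (ih e he).2)⟩

/-- Root-preserving isomorphism data. -/
def IsoRt (r r' : Label) (G G' : LGraph) (f : Label → Label) : Prop :=
  Set.BijOn f ↑G.V ↑G'.V ∧
  (∀ u ∈ G.V, ∀ v ∈ G.V, ((u, v) ∈ G.E ↔ (f u, f v) ∈ G'.E)) ∧
  (∀ v ∈ G.V, G.L v = G'.L (f v)) ∧
  f r = r' ∧ (r ∈ G.V ↔ r' ∈ G'.V)

lemma labT_iso : ∀ (S : NSeq) {r r' : Label} {G G' : LGraph},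
    LabT r S G → LabT r' S G' → ∃ f, IsoRt r r' G G' f := by
  intro S
  induction S with
  | empty =>
      intro r r' G G' h h'
      cases h; cases h'
      refine ⟨fun _ => r', ?_, ?_, ?_, rfl, ?_⟩
      · simpa using Set.bijOn_empty _
      · intro u hu; simp at hu
      · intro v hv; simp at hv
      · simp
  | fml A =>
      intro r r' G G' h h'
      cases h; cases h'
      refine ⟨fun _ => r', ⟨?_, ?_, ?_⟩, ?_, ?_, rfl, by simp⟩
      · intro z hz; simp
      · intro a ha b hb _; simp at ha hb; rw [ha, hb]
      · intro w hw; simp at hw; exact ⟨r, by simp, hw.symm⟩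
      · intro u hu v hv; simp
      · intro v hv; simp at hv; simp [hv]
  | comma X Y ihX ihY =>
      intro r r' G G' h h'
      cases h with
      | @comma _ _ _ G1 H1 hX hY hint =>
      cases h' with
      | @comma _ _ _ G1' H1' hX' hY' hint' =>
      obtain ⟨f1, hb1, he1, hl1, hr1, hm1⟩ := ihX hX hX'
      obtain ⟨f2, hb2, he2, hl2, hr2, hm2⟩ := ihY hY hY'
      have s1 := labT_support hX
      have s1' := labT_support hX'
      have s2 := labT_support hY
      have s2' := labT_support hY'
      have e1 := labT_edges hX
      have e1' := labT_edges hX'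
      have e2 := labT_edges hY
      have e2' := labT_edges hY'
      have m1 : ∀ u ∈ G1.V, f1 u ∈ G1'.V := fun u hu => by simpa using hb1.1 (by simpa using hu)
      have m2 : ∀ u ∈ H1.V, f2 u ∈ H1'.V := fun u hu => by simpa using hb2.1 (by simpa using hu)
      have i1 : ∀ u ∈ G1.V, ∀ v ∈ G1.V, f1 u = f1 v → u = v :=
        fun u hu v hv he => hb1.2.1 (by simpa using hu) (by simpa using hv) he
      have i2 : ∀ u ∈ H1.V, ∀ v ∈ H1.V, f2 u = f2 v → u = v :=
        fun u hu v hv he => hb2.2.1 (by simpa using hu) (by simpa using hv) he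
      have su1 : ∀ w ∈ G1'.V, ∃ u ∈ G1.V, f1 u = w := by
        intro w hw
        obtain ⟨u, hu, huw⟩ := hb1.2.2 (by simpa using hw)
        exact ⟨u, by simpa using hu, huw⟩
      have su2 : ∀ w ∈ H1'.V, ∃ u ∈ H1.V, f2 u = w := by
        intro w hw
        obtain ⟨u, hu, huw⟩ := hb2.2.2 (by simpa using hw)
        exact ⟨u, by simpa using hu, huw⟩
      classical
      refine ⟨fun w => if w ∈ G1.V then f1 w else f2 w, ?_⟩
      set f : Label → Label := fun w => if w ∈ G1.V then f1 w else f2 w with hfdef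
      have key1 : ∀ u ∈ G1.V, f u = f1 u := fun u hu => by
        simp only [hfdef]; rw [if_pos hu]
      have key2 : ∀ u ∈ H1.V, f u = f2 u := by
        intro u hu
        by_cases hg : u ∈ G1.V
        · have hur : u = r :=
            Finset.mem_singleton.mp (hint (Finset.mem_inter.mpr ⟨hg, hu⟩))
          subst hur
          rw [key1 u hg, hr1, hr2]
        · simp only [hfdef]; rw [if_neg hg]
      have claimA : ∀ u, u ∈ G1.V ∨ u ∈ H1.V → f u ∈ G1'.V → u ∈ G1.V := by
        intro u hu hfu
        by_contra hnot
        have hu2 : u ∈ H1.V := hu.resolve_left hnot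
        have hfu2 : f u ∈ H1'.V := by rw [key2 u hu2]; exact m2 u hu2
        have hfur : f u = r' :=
          Finset.mem_singleton.mp (hint' (Finset.mem_inter.mpr ⟨hfu, hfu2⟩))
        have hrH : r ∈ H1.V := hm2.mpr (hfur ▸ hfu2)
        have hur : u = r := i2 u hu2 r hrH (by rw [hr2, ← key2 u hu2]; exact hfur)
        exact hnot (hur ▸ hm1.mpr (hfur ▸ hfu))
      have claimB : ∀ u, u ∈ G1.V ∨ u ∈ H1.V → f u ∈ H1'.V → u ∈ H1.V := by
        intro u hu hfu
        by_contra hnot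
        have hu1 : u ∈ G1.V := hu.resolve_right hnot
        have hfu1 : f u ∈ G1'.V := by rw [key1 u hu1]; exact m1 u hu1
        have hfur : f u = r' :=
          Finset.mem_singleton.mp (hint' (Finset.mem_inter.mpr ⟨hfu1, hfu⟩))
        have hrG : r ∈ G1.V := hm1.mpr (hfur ▸ hfu1)
        have hur : u = r := i1 u hu1 r hrG (by rw [hr1, ← key1 u hu1]; exact hfur)
        exact hnot (hur ▸ hm2.mpr (hfur ▸ hfu))
      have lab1 : ∀ v, v ∈ G1.V ∨ v ∈ H1.V → G1.L v = G1'.L (f v) := by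
        intro v hv
        by_cases hg : v ∈ G1.V
        · rw [key1 v hg]; exact hl1 v hg
        · rw [s1 v hg, s1' (f v) (fun hc => hg (claimA v hv hc))]
      have lab2 : ∀ v, v ∈ G1.V ∨ v ∈ H1.V → H1.L v = H1'.L (f v) := by
        intro v hv
        by_cases hh : v ∈ H1.V
        · rw [key2 v hh]; exact hl2 v hh
        · rw [s2 v hh, s2' (f v) (fun hc => hh (claimB v hv hc))]
      refine ⟨⟨?_, ?_, ?_⟩, ?_, ?_, ?_, ?_⟩
      · -- MapsTo
        intro u hu
        simp only [LGraph.union, Finset.coe_union, Set.mem_union, Finset.mem_coe] at hu ⊢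
        rcases hu with hu | hu
        · exact Or.inl (by rw [key1 u hu]; exact m1 u hu)
        · exact Or.inr (by rw [key2 u hu]; exact m2 u hu)
      · -- InjOn
        intro a ha b hb hab
        simp only [LGraph.union, Finset.coe_union, Set.mem_union, Finset.mem_coe] at ha hb
        by_cases haG : a ∈ G1.V <;> by_cases hbG : b ∈ G1.V
        · exact i1 a haG b hbG (by rw [← key1 a haG, ← key1 b hbG]; exact hab)
        · exact absurd (claimA b hb (by rw [← hab, key1 a haG]; exact m1 a haG)) hbG
        · exact absurd (claimA a ha (by rw [hab, key1 b hbG]; exact m1 b hbG)) haG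
        · have haH : a ∈ H1.V := ha.resolve_left haG
          have hbH : b ∈ H1.V := hb.resolve_left hbG
          exact i2 a haH b hbH (by rw [← key2 a haH, ← key2 b hbH]; exact hab)
      · -- SurjOn
        intro w hw
        simp only [LGraph.union, Finset.coe_union, Set.mem_union, Finset.mem_coe] at hw
        rcases hw with hw | hw
        · obtain ⟨u, hu, huw⟩ := su1 w hw
          exact ⟨u, by simp only [LGraph.union, Finset.coe_union, Set.mem_union,
            Finset.mem_coe]; exact Or.inl hu, by rw [key1 u hu]; exact huw⟩
        · obtain ⟨u, hu, huw⟩ := su2 w hw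
          exact ⟨u, by simp only [LGraph.union, Finset.coe_union, Set.mem_union,
            Finset.mem_coe]; exact Or.inr hu, by rw [key2 u hu]; exact huw⟩
      · -- edges
        intro u hu v hv
        simp only [LGraph.union, Finset.mem_union] at hu hv ⊢
        constructor
        · rintro (hE | hE)
          · have hend := e1 _ hE
            exact Or.inl (by rw [key1 u hend.1, key1 v hend.2]; exact (he1 u hend.1 v hend.2).mp hE)
          · have hend := e2 _ hE
            exact Or.inr (by rw [key2 u hend.1, key2 v hend.2]; exact (he2 u hend.1 v hend.2).mp hE)
        · rintro (hE | hE)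
          · have hend := e1' _ hE
            have hu1 : u ∈ G1.V := claimA u hu hend.1
            have hv1 : v ∈ G1.V := claimA v hv hend.2
            exact Or.inl ((he1 u hu1 v hv1).mpr
              (by rw [← key1 u hu1, ← key1 v hv1]; exact hE))
          · have hend := e2' _ hE
            have hu1 : u ∈ H1.V := claimB u hu hend.1
            have hv1 : v ∈ H1.V := claimB v hv hend.2
            exact Or.inr ((he2 u hu1 v hv1).mpr
              (by rw [← key2 u hu1, ← key2 v hv1]; exact hE))
      · -- labels
        intro v hv
        simp only [LGraph.union, Finset.mem_union] at hv
        show G1.L v + H1.L v = G1'.L (f v) + H1'.L (f v)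
        rw [lab1 v hv, lab2 v hv]
      · -- root
        by_cases hg : r ∈ G1.V
        · rw [key1 r hg]; exact hr1
        · simp only [hfdef]; rw [if_neg hg]; exact hr2
      · -- root mem
        simp only [LGraph.union, Finset.mem_union]
        exact or_congr hm1 hm2
  | white X ihX =>
      intro r r' G G' h h'
      cases h with
      | @white _ y _ G0 hX0 hrV hry =>
      cases h' with
      | @white _ y' _ G0' hX0' hrV' hry' =>
      obtain ⟨f0, hb0, he0, hl0, hr0, hm0⟩ := ihX hX0 hX0'
      have s0 := labT_support hX0
      have s0' := labT_support hX0'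
      have e0 := labT_edges hX0
      have e0' := labT_edges hX0'
      have m0 : ∀ u ∈ G0.V, f0 u ∈ G0'.V := fun u hu => by simpa using hb0.1 (by simpa using hu)
      have i0 : ∀ u ∈ G0.V, ∀ v ∈ G0.V, f0 u = f0 v → u = v :=
        fun u hu v hv he => hb0.2.1 (by simpa using hu) (by simpa using hv) he
      have su0 : ∀ w ∈ G0'.V, ∃ u ∈ G0.V, f0 u = w := by
        intro w hw
        obtain ⟨u, hu, huw⟩ := hb0.2.2 (by simpa using hw)
        exact ⟨u, by simpa using hu, huw⟩
      classical
      refine ⟨fun w => if w = r then r' else f0 w, ?_⟩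
      set f : Label → Label := fun w => if w = r then r' else f0 w with hfdef
      have hfr : f r = r' := by simp [hfdef]
      have keyn : ∀ u, u ≠ r → f u = f0 u := fun u hu => by
        simp only [hfdef]; rw [if_neg hu]
      have hfy : f y = y' := by rw [keyn y (fun hc => hry hc.symm)]; exact hr0
      have claimy : ∀ u, u = y ∨ u ∈ G0.V → f0 u = y' → u = y := by
        intro u hu hfu
        rcases hu with hu | hu
        · exact hu
        · by_cases hyV : y ∈ G0.V
          · exact i0 u hu y hyV (by rw [hr0]; exact hfu)
          · exact absurd (hm0.mpr (hfu ▸ m0 u hu)) hyV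
      have claimV : ∀ u, u = y ∨ u ∈ G0.V → f0 u ∈ G0'.V → u ∈ G0.V := by
        intro u hu hfu
        rcases hu with rfl | hu
        · exact hm0.mpr (by rw [← hr0]; exact hfu)
        · exact hu
      have hnr' : ∀ u, u = y ∨ u ∈ G0.V → f0 u ≠ r' := by
        intro u hu hc
        rcases hu with hu | hu
        · subst hu; rw [hr0] at hc; exact hry' hc.symm
        · exact hrV' (hc ▸ m0 u hu)
      have memV : ∀ u : Label, u ∈ (insert r (insert y G0.V) : Finset Label) ↔
          u = r ∨ u = y ∨ u ∈ G0.V := by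
        intro u; simp [Finset.mem_insert]
      have memV' : ∀ u : Label, u ∈ (insert r' (insert y' G0'.V) : Finset Label) ↔
          u = r' ∨ u = y' ∨ u ∈ G0'.V := by
        intro u; simp [Finset.mem_insert]
      refine ⟨⟨?_, ?_, ?_⟩, ?_, ?_, hfr, ?_⟩
      · -- MapsTo
        intro u hu
        simp only [Finset.mem_coe, memV, memV'] at hu ⊢
        rcases hu with hu | hu
        · subst hu; rw [hfr]; exact Or.inl rfl
        · have hur : u ≠ r := by
            intro hc; rw [hc] at hu
            exact hu.elim hry hrV
          rw [keyn u hur]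
          rcases hu with hu | hu
          · subst hu; rw [hr0]; exact Or.inr (Or.inl rfl)
          · exact Or.inr (Or.inr (m0 u hu))
      · -- InjOn
        intro a ha b hb hab
        simp only [Finset.mem_coe, memV] at ha hb
        by_cases har : a = r <;> by_cases hbr : b = r
        · rw [har, hbr]
        · exfalso
          rw [har, hfr, keyn b hbr] at hab
          exact hnr' b (hb.resolve_left hbr) hab.symm
        · exfalso
          rw [hbr, hfr, keyn a har] at hab
          exact hnr' a (ha.resolve_left har) hab
        · rw [keyn a har, keyn b hbr] at hab
          have ha' := ha.resolve_left har
          have hb' := hb.resolve_left hbr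
          rcases ha' with ha' | ha' <;> rcases hb' with hb' | hb'
          · rw [ha', hb']
          · subst ha'; exact ((claimy b (Or.inr hb') (by rw [← hab, hr0])).symm)
          · subst hb'; exact claimy a (Or.inr ha') (by rw [hab, hr0])
          · exact i0 a ha' b hb' hab
      · -- SurjOn
        intro w hw
        simp only [Finset.mem_coe, memV'] at hw
        rcases hw with hw | hw | hw
        · exact ⟨r, by simp [memV], by rw [hfr, hw]⟩
        · exact ⟨y, by simp [memV], by rw [hfy, hw]⟩
        · obtain ⟨u, hu, huw⟩ := su0 w hw
          exact ⟨u, by simp [memV, hu], by rw [keyn u (fun hc => hrV (hc ▸ hu)), huw]⟩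
      · -- edges
        intro u hu v hv
        simp only [memV] at hu hv
        simp only [Finset.mem_insert]
        constructor
        · rintro (hE | hE)
          · rw [Prod.mk.injEq] at hE
            exact Or.inl (by rw [hE.1, hE.2, hfr, hfy])
          · have hend := e0 _ hE
            have hur : u ≠ r := fun hc => hrV (hc ▸ hend.1)
            have hvr : v ≠ r := fun hc => hrV (hc ▸ hend.2)
            exact Or.inr (by rw [keyn u hur, keyn v hvr]; exact (he0 u hend.1 v hend.2).mp hE)
        · rintro (hE | hE)
          · rw [Prod.mk.injEq] at hE
            have hur : u = r := by
              by_contra hur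
              exact hnr' u (hu.resolve_left hur) ((keyn u hur) ▸ hE.1)
            have hvr : v ≠ r := by
              intro hc
              rw [hc, hfr] at hE
              exact hry' hE.2
            have hvy : v = y :=
              claimy v (hv.resolve_left hvr) ((keyn v hvr) ▸ hE.2)
            exact Or.inl (by rw [hur, hvy])
          · have hend := e0' _ hE
            have hur : u ≠ r := by intro hc; rw [hc, hfr] at hend; exact hrV' hend.1
            have hvr : v ≠ r := by intro hc; rw [hc, hfr] at hend; exact hrV' hend.2
            rw [keyn u hur] at hE hend
            rw [keyn v hvr] at hE hend
            have hu0 : u ∈ G0.V := claimV u (hu.resolve_left hur) hend.1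
            have hv0 : v ∈ G0.V := claimV v (hv.resolve_left hvr) hend.2
            exact Or.inr ((he0 u hu0 v hv0).mpr hE)
      · -- labels
        intro v hv
        simp only [memV] at hv
        show G0.L v = G0'.L (f v)
        by_cases hvr : v = r
        · subst hvr
          rw [hfr, s0 v hrV, s0' r' hrV']
        · rw [keyn v hvr]
          rcases hv.resolve_left hvr with hv | hv
          · subst hv
            by_cases hyV : v ∈ G0.V
            · exact hl0 v hyV
            · rw [s0 v hyV, hr0, s0' y' (fun hc => hyV (hm0.mpr hc))]
          · exact hl0 v hv
      · -- root mem
        simp [memV, memV']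
  | black X ihX =>
      intro r r' G G' h h'
      cases h with
      | @black _ y _ G0 hX0 hrV hry =>
      cases h' with
      | @black _ y' _ G0' hX0' hrV' hry' =>
      obtain ⟨f0, hb0, he0, hl0, hr0, hm0⟩ := ihX hX0 hX0'
      have s0 := labT_support hX0
      have s0' := labT_support hX0'
      have e0 := labT_edges hX0
      have e0' := labT_edges hX0'
      have m0 : ∀ u ∈ G0.V, f0 u ∈ G0'.V := fun u hu => by simpa using hb0.1 (by simpa using hu)
      have i0 : ∀ u ∈ G0.V, ∀ v ∈ G0.V, f0 u = f0 v → u = v :=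
        fun u hu v hv he => hb0.2.1 (by simpa using hu) (by simpa using hv) he
      have su0 : ∀ w ∈ G0'.V, ∃ u ∈ G0.V, f0 u = w := by
        intro w hw
        obtain ⟨u, hu, huw⟩ := hb0.2.2 (by simpa using hw)
        exact ⟨u, by simpa using hu, huw⟩
      classical
      refine ⟨fun w => if w = r then r' else f0 w, ?_⟩
      set f : Label → Label := fun w => if w = r then r' else f0 w with hfdef
      have hfr : f r = r' := by simp [hfdef]
      have keyn : ∀ u, u ≠ r → f u = f0 u := fun u hu => by
        simp only [hfdef]; rw [if_neg hu]
      have hfy : f y = y' := by rw [keyn y (fun hc => hry hc.symm)]; exact hr0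
      have claimy : ∀ u, u = y ∨ u ∈ G0.V → f0 u = y' → u = y := by
        intro u hu hfu
        rcases hu with hu | hu
        · exact hu
        · by_cases hyV : y ∈ G0.V
          · exact i0 u hu y hyV (by rw [hr0]; exact hfu)
          · exact absurd (hm0.mpr (hfu ▸ m0 u hu)) hyV
      have claimV : ∀ u, u = y ∨ u ∈ G0.V → f0 u ∈ G0'.V → u ∈ G0.V := by
        intro u hu hfu
        rcases hu with rfl | hu
        · exact hm0.mpr (by rw [← hr0]; exact hfu)
        · exact hu
      have hnr' : ∀ u, u = y ∨ u ∈ G0.V → f0 u ≠ r' := by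
        intro u hu hc
        rcases hu with hu | hu
        · subst hu; rw [hr0] at hc; exact hry' hc.symm
        · exact hrV' (hc ▸ m0 u hu)
      have memV : ∀ u : Label, u ∈ (insert r (insert y G0.V) : Finset Label) ↔
          u = r ∨ u = y ∨ u ∈ G0.V := by
        intro u; simp [Finset.mem_insert]
      have memV' : ∀ u : Label, u ∈ (insert r' (insert y' G0'.V) : Finset Label) ↔
          u = r' ∨ u = y' ∨ u ∈ G0'.V := by
        intro u; simp [Finset.mem_insert]
      refine ⟨⟨?_, ?_, ?_⟩, ?_, ?_, hfr, ?_⟩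
      · -- MapsTo
        intro u hu
        simp only [Finset.mem_coe, memV, memV'] at hu ⊢
        rcases hu with hu | hu
        · subst hu; rw [hfr]; exact Or.inl rfl
        · have hur : u ≠ r := by
            intro hc; rw [hc] at hu
            exact hu.elim hry hrV
          rw [keyn u hur]
          rcases hu with hu | hu
          · subst hu; rw [hr0]; exact Or.inr (Or.inl rfl)
          · exact Or.inr (Or.inr (m0 u hu))
      · -- InjOn
        intro a ha b hb hab
        simp only [Finset.mem_coe, memV] at ha hb
        by_cases har : a = r <;> by_cases hbr : b = r
        · rw [har, hbr]
        · exfalso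
          rw [har, hfr, keyn b hbr] at hab
          exact hnr' b (hb.resolve_left hbr) hab.symm
        · exfalso
          rw [hbr, hfr, keyn a har] at hab
          exact hnr' a (ha.resolve_left har) hab
        · rw [keyn a har, keyn b hbr] at hab
          have ha' := ha.resolve_left har
          have hb' := hb.resolve_left hbr
          rcases ha' with ha' | ha' <;> rcases hb' with hb' | hb'
          · rw [ha', hb']
          · subst ha'; exact ((claimy b (Or.inr hb') (by rw [← hab, hr0])).symm)
          · subst hb'; exact claimy a (Or.inr ha') (by rw [hab, hr0])
          · exact i0 a ha' b hb' hab
      · -- SurjOn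
        intro w hw
        simp only [Finset.mem_coe, memV'] at hw
        rcases hw with hw | hw | hw
        · exact ⟨r, by simp [memV], by rw [hfr, hw]⟩
        · exact ⟨y, by simp [memV], by rw [hfy, hw]⟩
        · obtain ⟨u, hu, huw⟩ := su0 w hw
          exact ⟨u, by simp [memV, hu], by rw [keyn u (fun hc => hrV (hc ▸ hu)), huw]⟩
      · -- edges
        intro u hu v hv
        simp only [memV] at hu hv
        simp only [Finset.mem_insert]
        constructor
        · rintro (hE | hE)
          · rw [Prod.mk.injEq] at hE
            exact Or.inl (by rw [hE.1, hE.2, hfr, hfy])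
          · have hend := e0 _ hE
            have hur : u ≠ r := fun hc => hrV (hc ▸ hend.1)
            have hvr : v ≠ r := fun hc => hrV (hc ▸ hend.2)
            exact Or.inr (by rw [keyn u hur, keyn v hvr]; exact (he0 u hend.1 v hend.2).mp hE)
        · rintro (hE | hE)
          · rw [Prod.mk.injEq] at hE
            have hvr : v = r := by
              by_contra hvr
              exact hnr' v (hv.resolve_left hvr) ((keyn v hvr) ▸ hE.2)
            have hur : u ≠ r := by
              intro hc
              rw [hc, hfr] at hE
              exact hry' hE.1
            have huy : u = y :=
              claimy u (hu.resolve_left hur) ((keyn u hur) ▸ hE.1)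
            exact Or.inl (by rw [hvr, huy])
          · have hend := e0' _ hE
            have hur : u ≠ r := by intro hc; rw [hc, hfr] at hend; exact hrV' hend.1
            have hvr : v ≠ r := by intro hc; rw [hc, hfr] at hend; exact hrV' hend.2
            rw [keyn u hur] at hE hend
            rw [keyn v hvr] at hE hend
            have hu0 : u ∈ G0.V := claimV u (hu.resolve_left hur) hend.1
            have hv0 : v ∈ G0.V := claimV v (hv.resolve_left hvr) hend.2
            exact Or.inr ((he0 u hu0 v hv0).mpr hE)
      · -- labels
        intro v hv
        simp only [memV] at hv
        show G0.L v = G0'.L (f v)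
        by_cases hvr : v = r
        · subst hvr
          rw [hfr, s0 v hrV, s0' r' hrV']
        · rw [keyn v hvr]
          rcases hv.resolve_left hvr with hv | hv
          · subst hv
            by_cases hyV : v ∈ G0.V
            · exact hl0 v hyV
            · rw [s0 v hyV, hr0, s0' y' (fun hc => hyV (hm0.mpr hc))]
          · exact hl0 v hv
      · -- root mem
        simp [memV, memV']

/-- Lemma `isoresid`: for every label `x` and all nested
    sequents `X` and `Y`, the labeled polytrees `𝔏ₓ(X, ∘{Y})` and
    `𝔏ₓ(•{X}, Y)` are isomorphic as labeled graphs. -/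
theorem labelled_polytree_residuation_iso (x : Label) (X Y : NSeq) (G H : LGraph)
    (hG : LabT x (X.comma Y.white) G) (hH : LabT x (X.black.comma Y) H) :
    G.Iso H := by
  cases hG with
  | @comma _ _ _ G1 W hX hW hint =>
  cases hW with
  | @white _ y _ G2 hY2 hx2 hxy =>
  have hy1 : y ∉ G1.V := by
    intro hc
    have hyW : y ∈ (insert x (insert y G2.V) : Finset Label) := by simp
    have := hint (Finset.mem_inter.mpr ⟨hc, hyW⟩)
    exact hxy (Finset.mem_singleton.mp this).symm
  have hB : LabT y X.black
      ⟨insert y (insert x G1.V), insert (x, y) G1.E, G1.L⟩ :=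
    LabT.black hX hy1 (fun hc => hxy hc.symm)
  have hdisj2 : (insert y (insert x G1.V) : Finset Label) ∩ G2.V ⊆ {y} := by
    intro z hz
    rw [Finset.mem_inter, Finset.mem_insert, Finset.mem_insert] at hz
    rcases hz.1 with h | h | h
    · simp [h]
    · exact absurd (h ▸ hz.2) hx2
    · exfalso
      have hzm : z ∈ G1.V ∩ (insert x (insert y G2.V) : Finset Label) :=
        Finset.mem_inter.mpr ⟨h, by simp [hz.2]⟩
      have hzx := Finset.mem_singleton.mp (hint hzm)
      exact hx2 (hzx ▸ hz.2)
  have hC := LabT.comma hB hY2 hdisj2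
  have hVeq : (insert y (insert x G1.V) : Finset Label) ∪ G2.V
      = G1.V ∪ insert x (insert y G2.V) := by
    ext z
    simp only [Finset.mem_union, Finset.mem_insert]
    tauto
  have hEeq : insert (x, y) G1.E ∪ G2.E = G1.E ∪ insert (x, y) G2.E := by
    ext e
    simp only [Finset.mem_union, Finset.mem_insert]
    tauto
  have heq : (⟨insert y (insert x G1.V), insert (x, y) G1.E, G1.L⟩ : LGraph).union G2
      = G1.union ⟨insert x (insert y G2.V), insert (x, y) G2.E, G2.L⟩ := by
    simp only [LGraph.union]
    rw [hVeq, hEeq]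
  rw [heq] at hC
  obtain ⟨f, hb, he, hl, _, _⟩ := labT_iso _ hC hH
  exact ⟨f, hb, he, hl⟩
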